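/- arXiv:2406.05911 — 3 statements merged into one kernel-verified Lean document; each statement's English description precedes it below -/
import Mathlib

section
/- For a convex set K and any ε > 0, the map ν ↦ w(B(ν,ε)∩K) is concave on K: for ν₁,ν₂ ∈ K and α ∈ [0,1], w(B(αν₁+(1−α)ν₂, ε) ∩ K) ≥ α·w(B(ν₁,ε)∩K) + (1−α)·w(B(ν₂,ε)∩K). -/
open MeasureTheory Metric

noncomputable def stdGaussian (ι : Type*) [Fintype ι] : Measure (EuclideanSpace ℝ ι) :=
  (Measure.pi fun _ : ι => ProbabilityTheory.gaussianReal 0 1).map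
    (MeasurableEquiv.toLp 2 (ι → ℝ))

noncomputable def gaussianWidth {ι : Type*} [Fintype ι] (T : Set (EuclideanSpace ℝ ι)) : ℝ :=
  ∫ x, sSup ((fun t => (inner ℝ x t : ℝ)) '' T) ∂(stdGaussian ι)

section Aux

open ProbabilityTheory Real
open scoped NNReal ENNReal

lemma integrable_abs_gaussianReal : Integrable (fun x : ℝ => |x|) (gaussianReal 0 1) := by
  rw [gaussianReal_of_var_ne_zero 0 one_ne_zero]
  rw [integrable_withDensity_iff (measurable_gaussianPDF 0 1)
    (ae_of_all _ fun x => ENNReal.ofReal_lt_top)]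
  have h : Integrable (fun x : ℝ => x * rexp (-(2⁻¹ : ℝ) * x ^ 2)) volume :=
    integrable_mul_exp_neg_mul_sq (by norm_num)
  have h2 := h.abs.const_mul (√(2 * π * 1))⁻¹
  refine h2.congr (ae_of_all _ fun x => ?_)
  show (√(2 * π * 1))⁻¹ * |x * rexp (-(2⁻¹:ℝ) * x ^ 2)| = |x| * (gaussianPDF 0 1 x).toReal
  rw [gaussianPDF, ENNReal.toReal_ofReal (gaussianPDFReal_nonneg _ _ _), gaussianPDFReal,
    abs_mul, abs_of_pos (exp_pos _)]
  have : -(x - 0)^2/(2*((1:ℝ≥0):ℝ)) = -(2⁻¹:ℝ)*x^2 := by push_cast; ring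
  rw [this, NNReal.coe_one]; ring

variable {n : ℕ}

lemma map_eval_pi_gaussian (i : Fin n) :
    (Measure.pi fun _ : Fin n => gaussianReal 0 1).map (fun y => y i) = gaussianReal 0 1 := by
  refine Measure.ext fun s hs => ?_
  rw [Measure.map_apply (measurable_pi_apply i) hs]
  rw [show (fun y : Fin n → ℝ => y i) ⁻¹' s = Function.eval i ⁻¹' s from rfl,
    ← Set.univ_pi_update_univ, Measure.pi_pi]
  rw [Fintype.prod_eq_single i (fun j hj => by
    rw [Function.update_of_ne hj]; exact measure_univ)]
  rw [Function.update_self]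

lemma integrable_abs_eval (i : Fin n) :
    Integrable (fun y : Fin n → ℝ => |y i|)
      (Measure.pi fun _ : Fin n => gaussianReal 0 1) := by
  have h := integrable_abs_gaussianReal
  rw [← map_eval_pi_gaussian i] at h
  exact (integrable_map_measure continuous_abs.aestronglyMeasurable
    (measurable_pi_apply i).aemeasurable).mp h

lemma integrable_sum_abs :
    Integrable (fun y : Fin n → ℝ => ∑ i, |y i|)
      (Measure.pi fun _ : Fin n => gaussianReal 0 1) :=
  integrable_finset_sum _ fun i _ => integrable_abs_eval i

lemma euclidean_norm_le_sum_abs (y : Fin n → ℝ) :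
    ‖(MeasurableEquiv.toLp 2 (Fin n → ℝ)) y‖ ≤ ∑ i, |y i| := by
  have hnorm : ‖(MeasurableEquiv.toLp 2 (Fin n → ℝ)) y‖
      = √(∑ i, y i ^ 2) := by
    rw [EuclideanSpace.norm_eq]
    congr 1
    refine Finset.sum_congr rfl fun i _ => ?_
    rw [Real.norm_eq_abs, sq_abs]
    rfl
  rw [hnorm]
  have h1 : (∑ i, y i ^ 2) ≤ (∑ i, |y i|) ^ 2 := by
    have : ∀ i ∈ Finset.univ, y i ^ 2 ≤ |y i| * ∑ j, |y j| := by
      intro i _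
      have hle : |y i| ≤ ∑ j, |y j| :=
        Finset.single_le_sum (f := fun j => |y j|) (fun j _ => abs_nonneg _) (Finset.mem_univ i)
      calc y i ^ 2 = |y i| * |y i| := by rw [sq, ← abs_mul_abs_self]
        _ ≤ |y i| * ∑ j, |y j| := mul_le_mul_of_nonneg_left hle (abs_nonneg _)
    calc (∑ i, y i ^ 2) ≤ ∑ i, |y i| * ∑ j, |y j| := Finset.sum_le_sum this
      _ = (∑ i, |y i|) ^ 2 := by rw [← Finset.sum_mul]; ring
  calc √(∑ i, y i ^ 2) ≤ √((∑ i, |y i|) ^ 2) := Real.sqrt_le_sqrt h1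
    _ = ∑ i, |y i| := Real.sqrt_sq (Finset.sum_nonneg fun i _ => abs_nonneg _)

/-- the sup-of-inner function over a set. -/
noncomputable def supInner (S : Set (EuclideanSpace ℝ (Fin n)))
    (x : EuclideanSpace ℝ (Fin n)) : ℝ :=
  sSup ((fun t => (inner ℝ x t : ℝ)) '' S)

lemma gaussianWidth_eq (S : Set (EuclideanSpace ℝ (Fin n))) :
    gaussianWidth S = ∫ x, supInner S x ∂(stdGaussian (Fin n)) := rfl

lemma bddAbove_innerImage {S : Set (EuclideanSpace ℝ (Fin n))} {C : ℝ}
    (hC : S ⊆ closedBall 0 C) (x : EuclideanSpace ℝ (Fin n)) :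
    BddAbove ((fun t => (inner ℝ x t : ℝ)) '' S) := by
  refine ⟨‖x‖ * C, ?_⟩
  rintro r ⟨t, ht, rfl⟩
  have htC : ‖t‖ ≤ C := mem_closedBall_zero_iff.mp (hC ht)
  calc (inner ℝ x t : ℝ) ≤ ‖x‖ * ‖t‖ := real_inner_le_norm x t
    _ ≤ ‖x‖ * C := mul_le_mul_of_nonneg_left htC (norm_nonneg x)

lemma abs_supInner_le {S : Set (EuclideanSpace ℝ (Fin n))} (hne : S.Nonempty) {C : ℝ}
    (hC : S ⊆ closedBall 0 C) (x : EuclideanSpace ℝ (Fin n)) :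
    |supInner S x| ≤ C * ‖x‖ := by
  obtain ⟨t₀, ht₀⟩ := hne
  have hbound : ∀ t ∈ S, |(inner ℝ x t : ℝ)| ≤ C * ‖x‖ := by
    intro t ht
    have htC : ‖t‖ ≤ C := mem_closedBall_zero_iff.mp (hC ht)
    calc |(inner ℝ x t : ℝ)| ≤ ‖x‖ * ‖t‖ := abs_real_inner_le_norm x t
      _ ≤ ‖x‖ * C := mul_le_mul_of_nonneg_left htC (norm_nonneg x)
      _ = C * ‖x‖ := mul_comm _ _
  rw [abs_le]
  constructor
  · calc -(C * ‖x‖) ≤ (inner ℝ x t₀ : ℝ) := by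
          have := hbound t₀ ht₀; rw [abs_le] at this; exact this.1
      _ ≤ supInner S x := le_csSup (bddAbove_innerImage hC x) ⟨t₀, ht₀, rfl⟩
  · refine csSup_le ⟨_, t₀, ht₀, rfl⟩ ?_
    rintro r ⟨t, ht, rfl⟩
    exact (abs_le.mp (hbound t ht)).2

lemma continuous_supInner {S : Set (EuclideanSpace ℝ (Fin n))} (hne : S.Nonempty) {C : ℝ}
    (hC : S ⊆ closedBall 0 C) : Continuous (supInner S) := by
  have hC0 : 0 ≤ C := by
    obtain ⟨t₀, ht₀⟩ := hne
    exact le_trans (norm_nonneg t₀) (mem_closedBall_zero_iff.mp (hC ht₀))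
  have key : ∀ x y : EuclideanSpace ℝ (Fin n),
      supInner S x ≤ supInner S y + C * ‖x - y‖ := by
    intro x y
    refine csSup_le (hne.image _) ?_
    rintro r ⟨t, ht, rfl⟩
    have htC : ‖t‖ ≤ C := mem_closedBall_zero_iff.mp (hC ht)
    have h1 : (inner ℝ x t : ℝ) = (inner ℝ y t : ℝ) + (inner ℝ (x - y) t : ℝ) := by
      rw [inner_sub_left]; ring
    have h2 : (inner ℝ y t : ℝ) ≤ supInner S y :=
      le_csSup (bddAbove_innerImage hC y) ⟨t, ht, rfl⟩
    have h3 : (inner ℝ (x - y) t : ℝ) ≤ C * ‖x - y‖ := by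
      calc (inner ℝ (x - y) t : ℝ) ≤ ‖x - y‖ * ‖t‖ := real_inner_le_norm _ _
        _ ≤ ‖x - y‖ * C := mul_le_mul_of_nonneg_left htC (norm_nonneg _)
        _ = C * ‖x - y‖ := mul_comm _ _
    linarith
  refine (LipschitzWith.of_dist_le_mul (K := C.toNNReal) fun x y => ?_).continuous
  rw [Real.dist_eq, abs_le]
  have hCt : C ≤ (C.toNNReal : ℝ) := Real.le_coe_toNNReal C
  have hd : dist x y = ‖x - y‖ := dist_eq_norm x y
  have hd' : dist y x = ‖y - x‖ := dist_eq_norm y x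
  have hnn : ‖x - y‖ = ‖y - x‖ := norm_sub_rev x y
  have k1 := key x y
  have k2 := key y x
  have hmul : C * ‖x - y‖ ≤ (C.toNNReal : ℝ) * dist x y := by
    rw [hd]; exact mul_le_mul_of_nonneg_right hCt (norm_nonneg _)
  have hmul2 : C * ‖y - x‖ ≤ (C.toNNReal : ℝ) * dist x y := by
    rw [hd, hnn]; exact mul_le_mul_of_nonneg_right hCt (norm_nonneg _)
  constructor <;> [skip; skip] <;> nlinarith [k1, k2]

lemma integrable_supInner {S : Set (EuclideanSpace ℝ (Fin n))} (hne : S.Nonempty) {C : ℝ}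
    (hC : S ⊆ closedBall 0 C) :
    Integrable (supInner S) (stdGaussian (Fin n)) := by
  have hC0 : 0 ≤ C := by
    obtain ⟨t₀, ht₀⟩ := hne
    exact le_trans (norm_nonneg t₀) (mem_closedBall_zero_iff.mp (hC ht₀))
  rw [_root_.stdGaussian, (MeasurableEquiv.measurableEmbedding _).integrable_map_iff]
  have hint : Integrable (fun y : Fin n → ℝ => C * ∑ i, |y i|)
      (Measure.pi fun _ : Fin n => gaussianReal 0 1) := integrable_sum_abs.const_mul C
  refine hint.mono' ?_ (ae_of_all _ fun y => ?_)
  · exact ((continuous_supInner hne hC).stronglyMeasurable.comp_measurable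
      (MeasurableEquiv.measurable _)).aestronglyMeasurable
  · calc ‖supInner S ((MeasurableEquiv.toLp 2 (Fin n → ℝ)) y)‖
        ≤ C * ‖(MeasurableEquiv.toLp 2 (Fin n → ℝ)) y‖ :=
          abs_supInner_le hne hC _
      _ ≤ C * ∑ i, |y i| :=
          mul_le_mul_of_nonneg_left (euclidean_norm_le_sum_abs y) hC0

lemma convex_sup_le {A B : Set ℝ} (hA : A.Nonempty) (hB : B.Nonempty) {α g : ℝ}
    (h0 : 0 ≤ α) (h1 : α ≤ 1)
    (h : ∀ a ∈ A, ∀ b ∈ B, α * a + (1 - α) * b ≤ g) :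
    α * sSup A + (1 - α) * sSup B ≤ g := by
  obtain ⟨a₀, ha₀⟩ := id hA
  obtain ⟨b₀, hb₀⟩ := id hB
  rcases eq_or_lt_of_le h0 with rfl | hα
  · have : sSup B ≤ g := csSup_le hB fun b hb => by have := h a₀ ha₀ b hb; linarith
    linarith
  rcases eq_or_lt_of_le h1 with rfl | hα1
  · have : sSup A ≤ g := csSup_le hA fun a ha => by have := h a ha b₀ hb₀; linarith
    linarith
  · have hA' : sSup A ≤ (g - (1 - α) * sSup B) / α := by
      refine csSup_le hA fun a ha => ?_
      rw [le_div_iff₀ hα]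
      have hB' : sSup B ≤ (g - α * a) / (1 - α) := by
        refine csSup_le hB fun b hb => ?_
        rw [le_div_iff₀ (by linarith)]
        have := h a ha b hb; linarith
      have h2 := (le_div_iff₀ (by linarith : (0:ℝ) < 1 - α)).mp hB'
      linarith
    have h3 := (le_div_iff₀ hα).mp hA'
    linarith

end Aux

/-- for a convex `K` and `ε > 0`, the map `ν ↦ w(B(ν,ε)∩K)` is concave on `K`. -/
theorem stmt_1 {n : ℕ} (K : Set (EuclideanSpace ℝ (Fin n))) (hKconv : Convex ℝ K)
    (ε : ℝ) (hε : 0 < ε)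
    (ν₁ ν₂ : EuclideanSpace ℝ (Fin n)) (hν₁ : ν₁ ∈ K) (hν₂ : ν₂ ∈ K)
    (α : ℝ) (hα : α ∈ Set.Icc (0:ℝ) 1) :
    α * gaussianWidth (closedBall ν₁ ε ∩ K) + (1 - α) * gaussianWidth (closedBall ν₂ ε ∩ K) ≤
      gaussianWidth (closedBall (α • ν₁ + (1 - α) • ν₂) ε ∩ K) := by
  obtain ⟨h0, h1⟩ := hα
  have h1' : 0 ≤ 1 - α := by linarith
  set ν := α • ν₁ + (1 - α) • ν₂ with hν
  have hνK : ν ∈ K := hKconv hν₁ hν₂ h0 h1' (by ring)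
  set S₁ := closedBall ν₁ ε ∩ K
  set S₂ := closedBall ν₂ ε ∩ K
  set S := closedBall ν ε ∩ K
  have hne₁ : S₁.Nonempty := ⟨ν₁, mem_closedBall_self hε.le, hν₁⟩
  have hne₂ : S₂.Nonempty := ⟨ν₂, mem_closedBall_self hε.le, hν₂⟩
  have hneS : S.Nonempty := ⟨ν, mem_closedBall_self hε.le, hνK⟩
  set C : ℝ := ‖ν₁‖ + ‖ν₂‖ + ε with hCdef
  have hball : ∀ (μ : EuclideanSpace ℝ (Fin n)), ‖μ‖ ≤ ‖ν₁‖ + ‖ν₂‖ →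
      closedBall μ ε ∩ K ⊆ closedBall 0 C := by
    intro μ hμ t ⟨ht, _⟩
    rw [mem_closedBall_zero_iff]
    have : ‖t - μ‖ ≤ ε := mem_closedBall_iff_norm.mp ht
    calc ‖t‖ = ‖t - μ + μ‖ := by rw [show t - μ + μ = t from by abel]
      _ ≤ ‖t - μ‖ + ‖μ‖ := norm_add_le _ _
      _ ≤ C := by rw [hCdef]; linarith
  have hC₁ : S₁ ⊆ closedBall 0 C := hball ν₁ (by
    have := norm_nonneg ν₂; linarith)
  have hC₂ : S₂ ⊆ closedBall 0 C := hball ν₂ (by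
    have := norm_nonneg ν₁; linarith)
  have hCS : S ⊆ closedBall 0 C := hball ν (by
    calc ‖ν‖ ≤ ‖α • ν₁‖ + ‖(1 - α) • ν₂‖ := norm_add_le _ _
      _ = α * ‖ν₁‖ + (1 - α) * ‖ν₂‖ := by
          rw [norm_smul, norm_smul, Real.norm_eq_abs, Real.norm_eq_abs,
            abs_of_nonneg h0, abs_of_nonneg h1']
      _ ≤ ‖ν₁‖ + ‖ν₂‖ := by nlinarith [norm_nonneg ν₁, norm_nonneg ν₂])
  -- inclusion of the convex combination
  have hsub : ∀ t₁ ∈ S₁, ∀ t₂ ∈ S₂, α • t₁ + (1 - α) • t₂ ∈ S := by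
    rintro t₁ ⟨hb₁, hk₁⟩ t₂ ⟨hb₂, hk₂⟩
    refine ⟨?_, hKconv hk₁ hk₂ h0 h1' (by ring)⟩
    rw [mem_closedBall_iff_norm]
    have heq : α • t₁ + (1 - α) • t₂ - ν = α • (t₁ - ν₁) + (1 - α) • (t₂ - ν₂) := by
      rw [hν]; module
    rw [heq]
    calc ‖α • (t₁ - ν₁) + (1 - α) • (t₂ - ν₂)‖
        ≤ ‖α • (t₁ - ν₁)‖ + ‖(1 - α) • (t₂ - ν₂)‖ := norm_add_le _ _
      _ = α * ‖t₁ - ν₁‖ + (1 - α) * ‖t₂ - ν₂‖ := by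
          rw [norm_smul, norm_smul, Real.norm_eq_abs, Real.norm_eq_abs,
            abs_of_nonneg h0, abs_of_nonneg h1']
      _ ≤ α * ε + (1 - α) * ε := by
          have e1 : ‖t₁ - ν₁‖ ≤ ε := mem_closedBall_iff_norm.mp hb₁
          have e2 : ‖t₂ - ν₂‖ ≤ ε := mem_closedBall_iff_norm.mp hb₂
          have := mul_le_mul_of_nonneg_left e1 h0
          have := mul_le_mul_of_nonneg_left e2 h1'
          linarith
      _ = ε := by ring
  -- pointwise inequality
  have hpt : ∀ x : EuclideanSpace ℝ (Fin n),
      α * supInner S₁ x + (1 - α) * supInner S₂ x ≤ supInner S x := by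
    intro x
    refine convex_sup_le (hne₁.image _) (hne₂.image _) h0 h1 ?_
    rintro _ ⟨t₁, ht₁, rfl⟩ _ ⟨t₂, ht₂, rfl⟩
    have hmem := hsub t₁ ht₁ t₂ ht₂
    have hcalc : α * (inner ℝ x t₁ : ℝ) + (1 - α) * (inner ℝ x t₂ : ℝ)
        = (inner ℝ x (α • t₁ + (1 - α) • t₂) : ℝ) := by
      rw [inner_add_right, real_inner_smul_right, real_inner_smul_right]
    rw [hcalc]
    exact le_csSup (bddAbove_innerImage hCS x) ⟨_, hmem, rfl⟩
  -- integrate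
  have hi₁ : Integrable (supInner S₁) (stdGaussian (Fin n)) := integrable_supInner hne₁ hC₁
  have hi₂ : Integrable (supInner S₂) (stdGaussian (Fin n)) := integrable_supInner hne₂ hC₂
  have hiS : Integrable (supInner S) (stdGaussian (Fin n)) := integrable_supInner hneS hCS
  rw [gaussianWidth_eq, gaussianWidth_eq, gaussianWidth_eq,
    ← integral_const_mul, ← integral_const_mul,
    ← integral_add (hi₁.const_mul α) (hi₂.const_mul (1 - α))]
  exact integral_mono ((hi₁.const_mul α).add (hi₂.const_mul (1 - α))) hiS hpt
end

section
/- For a convex set K ⊂ R^n, any ε > 0, and any μ,ν ∈ K, the local Gaussian widths satisfy |w_μ(ε) − w_ν(ε)| ≤ ‖μ−ν‖·(w_μ(ε) ∧ w_ν(ε))/ε ≤ √n·‖μ−ν‖. In particular ν ↦ w_ν(ε) is √n-Lipschitz on K. -/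
open MeasureTheory Metric

/-- the local Gaussian width `w_μ(ε) = w(B(μ,ε) ∩ K)` -/
noncomputable def locWidth {ι : Type*} [Fintype ι] (K : Set (EuclideanSpace ℝ ι))
    (μ : EuclideanSpace ℝ ι) (ε : ℝ) : ℝ :=
  gaussianWidth (closedBall μ ε ∩ K)

section Aux
open ProbabilityTheory Real Set Filter Topology
open scoped ENNReal NNReal

set_option linter.unusedSectionVars false
set_option linter.unusedVariables false

lemma my_ibp : ∫ x in Ioi (0:ℝ), x ^ 2 * Real.exp (-(2⁻¹:ℝ) * x ^ 2)
    = ∫ x in Ioi (0:ℝ), Real.exp (-(2⁻¹:ℝ) * x ^ 2) := by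
  have hb : (0:ℝ) < 2⁻¹ := by norm_num
  have hders : ∀ x : ℝ, HasDerivAt (fun y : ℝ => -Real.exp (-(2⁻¹:ℝ) * y ^ 2))
      (x * Real.exp (-(2⁻¹:ℝ) * x ^ 2)) x := by
    intro x
    have h1 : HasDerivAt (fun y : ℝ => -(2⁻¹:ℝ) * y ^ 2) (-(2⁻¹:ℝ) * (2 * x ^ 1)) x :=
      (hasDerivAt_pow 2 x).const_mul _
    have h2 := (h1.exp).neg
    exact h2.congr_deriv (by ring)
  have key := integral_Ioi_mul_deriv_eq_deriv_mul
    (u := fun x : ℝ => x) (u' := fun _ => (1:ℝ))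
    (v := fun x : ℝ => -Real.exp (-(2⁻¹:ℝ) * x ^ 2))
    (v' := fun x : ℝ => x * Real.exp (-(2⁻¹:ℝ) * x ^ 2))
    (a := 0) (a' := 0) (b' := 0)
    (fun x _ => hasDerivAt_id x) (fun x _ => hders x)
    ?_ ?_ ?_ ?_
  · have hL : ∫ x in Ioi (0:ℝ), x * (x * Real.exp (-(2⁻¹:ℝ) * x ^ 2))
        = ∫ x in Ioi (0:ℝ), x ^ 2 * Real.exp (-(2⁻¹:ℝ) * x ^ 2) := by
      apply integral_congr_ae; filter_upwards with x; ring
    have hR : ∫ x in Ioi (0:ℝ), (1:ℝ) * -Real.exp (-(2⁻¹:ℝ) * x ^ 2)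
        = -∫ x in Ioi (0:ℝ), Real.exp (-(2⁻¹:ℝ) * x ^ 2) := by
      rw [← integral_neg]; apply integral_congr_ae; filter_upwards with x; ring
    rw [hL, hR] at key
    linarith [key]
  · have h := (integrable_rpow_mul_exp_neg_mul_sq hb (s := 2) (by norm_num)).integrableOn
      (s := Ioi (0:ℝ))
    apply h.congr_fun ?_ measurableSet_Ioi
    intro x _
    have hx2 : x ^ (2:ℝ) = x * x := by
      rw [show (2:ℝ) = ((2:ℕ):ℝ) by norm_num, Real.rpow_natCast]; ring
    simp only [Pi.mul_apply, hx2]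
    ring
  · have h := ((integrable_exp_neg_mul_sq hb).neg).integrableOn (s := Ioi (0:ℝ))
    apply h.congr_fun ?_ measurableSet_Ioi
    intro x _
    simp [Pi.mul_apply]
  · have hc : Continuous (fun x : ℝ => x * -Real.exp (-(2⁻¹:ℝ) * x ^ 2)) := by
      continuity
    exact (hc.tendsto' 0 0 (by simp)).mono_left nhdsWithin_le_nhds
  · have ho := rpow_mul_exp_neg_mul_sq_isLittleO_exp_neg hb (1:ℝ)
    have hexp : Tendsto (fun x : ℝ => Real.exp (-(1/2 : ℝ) * x)) atTop (𝓝 0) := by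
      have : Tendsto (fun x : ℝ => -(1/2 : ℝ) * x) atTop atBot :=
        Tendsto.const_mul_atTop_of_neg (by norm_num) tendsto_id
      exact Real.tendsto_exp_atBot.comp this
    have h0 : Tendsto (fun x : ℝ => x ^ (1:ℝ) * Real.exp (-(2⁻¹:ℝ) * x ^ 2)) atTop (𝓝 0) :=
      ho.isBigO.trans_tendsto hexp
    have h1 : Tendsto (fun x : ℝ => x * -Real.exp (-(2⁻¹:ℝ) * x ^ 2)) atTop (𝓝 0) := by
      have h2 := h0.neg
      rw [neg_zero] at h2
      apply h2.congr
      intro x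
      rw [Real.rpow_one]
      ring
    exact h1
open scoped ENNReal NNReal

lemma my_gauss_int (g : ℝ → ℝ) :
    ∫ x, g x ∂(gaussianReal 0 1) = ∫ x, gaussianPDFReal 0 1 x * g x := by
  rw [gaussianReal_of_var_ne_zero 0 one_ne_zero]
  have hmeas : Measurable (fun x => (gaussianPDFReal 0 1 x).toNNReal) :=
    (measurable_gaussianPDFReal 0 1).real_toNNReal
  have hd : gaussianPDF 0 1 = fun x => ((gaussianPDFReal 0 1 x).toNNReal : ℝ≥0∞) := rfl
  rw [hd, integral_withDensity_eq_integral_smul hmeas]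
  congr 1
  ext x
  simp [NNReal.smul_def, Real.coe_toNNReal _ (gaussianPDFReal_nonneg 0 1 x), smul_eq_mul]

lemma my_gauss_integrable (g : ℝ → ℝ) (hg : Integrable (fun x => gaussianPDFReal 0 1 x * g x)) :
    Integrable g (gaussianReal 0 1) := by
  rw [gaussianReal_of_var_ne_zero 0 one_ne_zero]
  have hmeas : Measurable (fun x => (gaussianPDFReal 0 1 x).toNNReal) :=
    (measurable_gaussianPDFReal 0 1).real_toNNReal
  have hd : gaussianPDF 0 1 = fun x => ((gaussianPDFReal 0 1 x).toNNReal : ℝ≥0∞) := rfl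
  rw [hd, integrable_withDensity_iff_integrable_smul hmeas]
  apply hg.congr
  filter_upwards with x
  simp [NNReal.smul_def, Real.coe_toNNReal _ (gaussianPDFReal_nonneg 0 1 x), smul_eq_mul]

lemma my_pdf_eq : gaussianPDFReal 0 1
    = fun x => (Real.sqrt (2 * π))⁻¹ * Real.exp (-(2⁻¹:ℝ) * x ^ 2) := by
  ext x
  simp only [gaussianPDFReal, NNReal.coe_one, mul_one, sub_zero]
  congr 1
  ring_nf

lemma my_integrable_pdf_mul_id :
    Integrable (fun x => gaussianPDFReal 0 1 x * x) := by
  rw [my_pdf_eq]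
  have h := (integrable_mul_exp_neg_mul_sq (b := (2⁻¹:ℝ)) (by norm_num)).const_mul
    ((Real.sqrt (2 * π))⁻¹)
  apply h.congr
  filter_upwards with x
  ring

lemma my_integrable_pdf_mul_sq :
    Integrable (fun x => gaussianPDFReal 0 1 x * x ^ 2) := by
  rw [my_pdf_eq]
  have h := (integrable_rpow_mul_exp_neg_mul_sq (b := (2⁻¹:ℝ)) (by norm_num)
    (s := 2) (by norm_num)).const_mul ((Real.sqrt (2 * π))⁻¹)
  apply h.congr
  filter_upwards with x
  have hx2 : x ^ (2:ℝ) = x ^ 2 := by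
    rw [show (2:ℝ) = ((2:ℕ):ℝ) by norm_num, Real.rpow_natCast]
  rw [hx2]; ring

lemma my_gauss_mean : ∫ x, x ∂(gaussianReal 0 1) = 0 := by
  rw [my_gauss_int]
  have hodd : ∀ x : ℝ, gaussianPDFReal 0 1 (-x) * (-x) = -(gaussianPDFReal 0 1 x * x) := by
    intro x
    rw [my_pdf_eq]
    simp only
    ring_nf
  have h1 : ∫ x : ℝ, gaussianPDFReal 0 1 x * x
      = ∫ x : ℝ, gaussianPDFReal 0 1 (-x) * (-x) := by
    rw [integral_neg_eq_self (fun x : ℝ => gaussianPDFReal 0 1 x * x)]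
  have h2 : ∫ x : ℝ, gaussianPDFReal 0 1 (-x) * (-x)
      = -∫ x : ℝ, gaussianPDFReal 0 1 x * x := by
    rw [← integral_neg]
    exact integral_congr_ae (Eventually.of_forall hodd)
  linarith [h1, h2]

lemma my_gauss_sq : ∫ x, x ^ 2 ∂(gaussianReal 0 1) = 1 := by
  rw [my_gauss_int, my_pdf_eq]
  have e1 : ∫ x : ℝ, (Real.sqrt (2 * π))⁻¹ * Real.exp (-(2⁻¹:ℝ) * x ^ 2) * x ^ 2
      = (Real.sqrt (2 * π))⁻¹ * ∫ x : ℝ, x ^ 2 * Real.exp (-(2⁻¹:ℝ) * x ^ 2) := by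
    rw [← integral_const_mul]
    exact integral_congr_ae (Eventually.of_forall fun x => by ring)
  have e2 : ∫ x : ℝ, x ^ 2 * Real.exp (-(2⁻¹:ℝ) * x ^ 2)
      = ∫ x : ℝ, Real.exp (-(2⁻¹:ℝ) * x ^ 2) := by
    have ha : ∫ x : ℝ, x ^ 2 * Real.exp (-(2⁻¹:ℝ) * x ^ 2)
        = 2 * ∫ x in Ioi (0:ℝ), x ^ 2 * Real.exp (-(2⁻¹:ℝ) * x ^ 2) := by
      rw [← integral_comp_abs (f := fun t => t ^ 2 * Real.exp (-(2⁻¹:ℝ) * t ^ 2))]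
      exact integral_congr_ae (Eventually.of_forall fun x => by simp [sq_abs])
    have hb : ∫ x : ℝ, Real.exp (-(2⁻¹:ℝ) * x ^ 2)
        = 2 * ∫ x in Ioi (0:ℝ), Real.exp (-(2⁻¹:ℝ) * x ^ 2) := by
      rw [← integral_comp_abs (f := fun t => Real.exp (-(2⁻¹:ℝ) * t ^ 2))]
      exact integral_congr_ae (Eventually.of_forall fun x => by simp [sq_abs])
    rw [ha, hb, my_ibp]
  have e3 : (Real.sqrt (2 * π))⁻¹ * ∫ x : ℝ, Real.exp (-(2⁻¹:ℝ) * x ^ 2) = 1 := by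
    have := integral_gaussianPDFReal_eq_one 0 (v := 1) one_ne_zero
    rw [my_pdf_eq] at this
    rw [← MeasureTheory.integral_const_mul ((Real.sqrt (2*π))⁻¹) (fun x => Real.exp (-(2⁻¹:ℝ) * x^2))]
    simpa using this
  rw [e1, e2, e3]

variable {ι : Type*} [Fintype ι]

lemma my_pi_map_eval {α : ι → Type*} [∀ i, MeasurableSpace (α i)]
    (μ : ∀ i, Measure (α i)) [∀ i, IsProbabilityMeasure (μ i)] (i : ι) :
    (Measure.pi μ).map (Function.eval i) = μ i := by
  classical
  ext s hs
  rw [Measure.map_apply (measurable_pi_apply i) hs]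
  have hpre : Function.eval i ⁻¹' s
      = Set.pi Set.univ (Function.update (fun j => (Set.univ : Set (α j))) i s) := by
    ext y
    simp only [Set.mem_preimage, Set.mem_pi, Set.mem_univ, forall_true_left]
    constructor
    · intro hy j
      rcases eq_or_ne j i with rfl | hj
      · simpa using hy
      · simp [Function.update_of_ne hj]
    · intro hy
      have := hy i
      simpa using this
  rw [hpre, Measure.pi_pi]
  rw [Finset.prod_eq_single i (fun j _ hj => by simp [Function.update_of_ne hj])
    (fun h => absurd (Finset.mem_univ i) h)]
  simp

instance : IsProbabilityMeasure (stdGaussian ι) := by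
  rw [_root_.stdGaussian]
  exact Measure.isProbabilityMeasure_map (MeasurableEquiv.toLp 2 (ι → ℝ)).measurable.aemeasurable

lemma my_coord_measurable (i : ι) : Measurable (fun x : EuclideanSpace ℝ ι => x i) :=
  (measurable_pi_apply i).comp (MeasurableEquiv.toLp 2 (ι → ℝ)).symm.measurable

lemma my_map_coord (i : ι) :
    (stdGaussian ι).map (fun x => x i) = gaussianReal 0 1 := by
  rw [_root_.stdGaussian, Measure.map_map (my_coord_measurable i)
    (MeasurableEquiv.toLp 2 (ι → ℝ)).measurable]
  have : (fun x : EuclideanSpace ℝ ι => x i) ∘ (MeasurableEquiv.toLp 2 (ι → ℝ))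
      = Function.eval i := rfl
  rw [this, my_pi_map_eval]

lemma my_coord_integrable {g : ℝ → ℝ} (hg : Integrable g (gaussianReal 0 1))
    (hgm : Measurable g) (i : ι) :
    Integrable (fun x : EuclideanSpace ℝ ι => g (x i)) (stdGaussian ι) := by
  rw [← my_map_coord i] at hg
  exact (integrable_map_measure hg.aestronglyMeasurable
    (my_coord_measurable i).aemeasurable).mp hg

lemma my_coord_integral {g : ℝ → ℝ} (hgm : Measurable g) (i : ι) :
    ∫ x, g (x i) ∂(stdGaussian ι) = ∫ y, g y ∂(gaussianReal 0 1) := by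
  rw [← my_map_coord i, integral_map (my_coord_measurable i).aemeasurable]
  exact hgm.aestronglyMeasurable

lemma my_integrable_coord (i : ι) :
    Integrable (fun x : EuclideanSpace ℝ ι => x i) (stdGaussian ι) :=
  my_coord_integrable (my_gauss_integrable _ my_integrable_pdf_mul_id) measurable_id i

lemma my_integrable_coord_sq (i : ι) :
    Integrable (fun x : EuclideanSpace ℝ ι => (x i) ^ 2) (stdGaussian ι) :=
  my_coord_integrable (my_gauss_integrable _ my_integrable_pdf_mul_sq)
    (measurable_id.pow_const 2) i

lemma my_integral_coord (i : ι) : ∫ x, x i ∂(stdGaussian ι) = 0 := by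
  rw [show (fun x : EuclideanSpace ℝ ι => x i) = fun x => (fun y : ℝ => y) (x i) from rfl,
    my_coord_integral (g := fun y : ℝ => y) (by measurability) i]; exact my_gauss_mean

lemma my_integral_coord_sq (i : ι) : ∫ x, (x i) ^ 2 ∂(stdGaussian ι) = 1 := by
  rw [show (fun x : EuclideanSpace ℝ ι => (x i) ^ 2) = fun x => (fun y : ℝ => y ^ 2) (x i) from rfl,
    my_coord_integral (g := fun y : ℝ => y ^ 2) (by measurability) i]; exact my_gauss_sq

lemma my_norm_sq_eq (x : EuclideanSpace ℝ ι) : ‖x‖ ^ 2 = ∑ i, (x i) ^ 2 := by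
  rw [EuclideanSpace.norm_eq, Real.sq_sqrt (by positivity)]
  simp [Real.norm_eq_abs, sq_abs]

lemma my_integrable_norm_sq :
    Integrable (fun x : EuclideanSpace ℝ ι => ‖x‖ ^ 2) (stdGaussian ι) := by
  have h : Integrable (fun x : EuclideanSpace ℝ ι => ∑ i, (x i) ^ 2) (stdGaussian ι) :=
    integrable_finset_sum _ (fun i _ => my_integrable_coord_sq i)
  exact h.congr (Eventually.of_forall fun x => (my_norm_sq_eq x).symm)

lemma my_integral_norm_sq :
    ∫ x, ‖x‖ ^ 2 ∂(stdGaussian ι) = (Fintype.card ι : ℝ) := by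
  have h : ∫ x, ‖x‖ ^ 2 ∂(stdGaussian ι) = ∫ x, ∑ i, (x i) ^ 2 ∂(stdGaussian ι) :=
    integral_congr_ae (Eventually.of_forall fun x => my_norm_sq_eq x)
  rw [h, integral_finset_sum _ (fun i _ => my_integrable_coord_sq i)]
  simp [my_integral_coord_sq]

lemma my_memLp_norm : MemLp (fun x : EuclideanSpace ℝ ι => ‖x‖) 2 (stdGaussian ι) := by
  rw [memLp_two_iff_integrable_sq continuous_norm.aestronglyMeasurable]
  exact my_integrable_norm_sq

lemma my_integrable_norm : Integrable (fun x : EuclideanSpace ℝ ι => ‖x‖) (stdGaussian ι) :=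
  (my_memLp_norm.mono_exponent (by norm_num)).integrable le_rfl

lemma my_expected_norm_le : ∫ x, ‖x‖ ∂(stdGaussian ι) ≤ Real.sqrt (Fintype.card ι) := by
  have hvar := variance_nonneg (fun x : EuclideanSpace ℝ ι => ‖x‖) (stdGaussian ι)
  rw [variance_eq_sub my_memLp_norm] at hvar
  have h2 : ∫ x, ((fun x : EuclideanSpace ℝ ι => ‖x‖) ^ 2) x ∂(stdGaussian ι)
      = (Fintype.card ι : ℝ) := by
    rw [← my_integral_norm_sq]
    exact integral_congr_ae (Eventually.of_forall fun x => by simp [pow_two])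
  rw [h2] at hvar
  have hnn : 0 ≤ ∫ x, ‖x‖ ∂(stdGaussian ι) := integral_nonneg fun x => norm_nonneg _
  rw [show (fun x : EuclideanSpace ℝ ι => ‖x‖) = fun x => ‖x‖ from rfl] at hvar
  nlinarith [Real.sq_sqrt (show (0:ℝ) ≤ (Fintype.card ι : ℝ) by positivity),
    Real.sqrt_nonneg ((Fintype.card ι : ℝ))]

lemma my_inner_eq (x t : EuclideanSpace ℝ ι) : (inner ℝ x t : ℝ) = ∑ i, x i * t i := by
  simp [PiLp.inner_apply, RCLike.inner_apply, conj_trivial, mul_comm]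

lemma my_integrable_inner (t : EuclideanSpace ℝ ι) :
    Integrable (fun x : EuclideanSpace ℝ ι => (inner ℝ x t : ℝ)) (stdGaussian ι) := by
  have h : Integrable (fun x : EuclideanSpace ℝ ι => ∑ i, x i * t i) (stdGaussian ι) :=
    integrable_finset_sum _ (fun i _ => (my_integrable_coord i).mul_const (t i))
  exact h.congr (Eventually.of_forall fun x => (my_inner_eq x t).symm)

lemma my_integral_inner (t : EuclideanSpace ℝ ι) :
    ∫ x, (inner ℝ x t : ℝ) ∂(stdGaussian ι) = 0 := by
  have h : ∫ x, (inner ℝ x t : ℝ) ∂(stdGaussian ι)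
      = ∫ x, ∑ i, x i * t i ∂(stdGaussian ι) :=
    integral_congr_ae (Eventually.of_forall fun x => my_inner_eq x t)
  rw [h, integral_finset_sum _ (fun i _ => (my_integrable_coord i).mul_const (t i))]
  have : ∀ i : ι, ∫ x, x i * t i ∂(stdGaussian ι) = 0 := by
    intro i
    rw [integral_mul_const, my_integral_coord, zero_mul]
  simp [this]

section supfun

variable {T : Set (EuclideanSpace ℝ ι)} {R : ℝ}

lemma my_bddAbove (hT : ∀ t ∈ T, ‖t‖ ≤ R) (x : EuclideanSpace ℝ ι) :
    BddAbove ((fun t => (inner ℝ x t : ℝ)) '' T) := by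
  refine ⟨‖x‖ * R, ?_⟩
  rintro _ ⟨t, ht, rfl⟩
  exact (real_inner_le_norm x t).trans
    (mul_le_mul_of_nonneg_left (hT t ht) (norm_nonneg x))

lemma my_sup_le_elem (hT : ∀ t ∈ T, ‖t‖ ≤ R) {t : EuclideanSpace ℝ ι} (ht : t ∈ T)
    (x : EuclideanSpace ℝ ι) :
    (inner ℝ x t : ℝ) ≤ sSup ((fun t => (inner ℝ x t : ℝ)) '' T) :=
  le_csSup (my_bddAbove hT x) (Set.mem_image_of_mem _ ht)

lemma my_abs_sup_le (hne : T.Nonempty) (hT : ∀ t ∈ T, ‖t‖ ≤ R) (x : EuclideanSpace ℝ ι) :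
    |sSup ((fun t => (inner ℝ x t : ℝ)) '' T)| ≤ ‖x‖ * R := by
  obtain ⟨t₀, ht₀⟩ := id hne
  rw [abs_le]
  constructor
  · refine le_trans ?_ (my_sup_le_elem hT ht₀ x)
    have h1 := abs_real_inner_le_norm x t₀
    have h2 := mul_le_mul_of_nonneg_left (hT t₀ ht₀) (norm_nonneg x)
    rw [abs_le] at h1
    linarith [h1.1]
  · refine csSup_le (hne.image _) ?_
    rintro _ ⟨t, ht, rfl⟩
    exact (real_inner_le_norm x t).trans
      (mul_le_mul_of_nonneg_left (hT t ht) (norm_nonneg x))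

lemma my_sup_sub_le (hne : T.Nonempty) (hT : ∀ t ∈ T, ‖t‖ ≤ R)
    (x y : EuclideanSpace ℝ ι) :
    sSup ((fun t => (inner ℝ x t : ℝ)) '' T)
      ≤ sSup ((fun t => (inner ℝ y t : ℝ)) '' T) + ‖x - y‖ * R := by
  refine csSup_le (hne.image _) ?_
  rintro _ ⟨t, ht, rfl⟩
  have h1 : (inner ℝ x t : ℝ) = (inner ℝ y t : ℝ) + (inner ℝ (x - y) t : ℝ) := by
    rw [inner_sub_left]; ring
  have h2 : (inner ℝ (x - y) t : ℝ) ≤ ‖x - y‖ * R :=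
    (real_inner_le_norm _ t).trans (mul_le_mul_of_nonneg_left (hT t ht) (norm_nonneg _))
  have h3 := my_sup_le_elem hT ht y
  linarith

lemma my_sup_continuous (hne : T.Nonempty) (hR : 0 ≤ R) (hT : ∀ t ∈ T, ‖t‖ ≤ R) :
    Continuous (fun x : EuclideanSpace ℝ ι => sSup ((fun t => (inner ℝ x t : ℝ)) '' T)) := by
  have : LipschitzWith R.toNNReal
      (fun x : EuclideanSpace ℝ ι => sSup ((fun t => (inner ℝ x t : ℝ)) '' T)) := by
    apply LipschitzWith.of_dist_le_mul
    intro x y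
    rw [Real.dist_eq, Real.coe_toNNReal _ hR, dist_eq_norm, abs_sub_le_iff]
    constructor
    · have := my_sup_sub_le hne hT x y
      rw [mul_comm] at this ⊢
      linarith
    · have := my_sup_sub_le hne hT y x
      rw [norm_sub_rev] at this
      rw [mul_comm] at this ⊢
      linarith
  exact this.continuous

lemma my_sup_integrable (hne : T.Nonempty) (hR : 0 ≤ R) (hT : ∀ t ∈ T, ‖t‖ ≤ R) :
    Integrable (fun x : EuclideanSpace ℝ ι => sSup ((fun t => (inner ℝ x t : ℝ)) '' T))
      (stdGaussian ι) := by
  refine Integrable.mono' (my_integrable_norm.mul_const R)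
    (my_sup_continuous hne hR hT).aestronglyMeasurable ?_
  filter_upwards with x
  rw [Real.norm_eq_abs]
  exact my_abs_sup_le hne hT x

end supfun

section width

variable {K : Set (EuclideanSpace ℝ ι)} {ε : ℝ} {μ ν : EuclideanSpace ℝ ι}

lemma my_locT_mem (hε : 0 < ε) (hμ : μ ∈ K) : μ ∈ Metric.closedBall μ ε ∩ K :=
  ⟨Metric.mem_closedBall_self hε.le, hμ⟩

lemma my_locT_bound (t : EuclideanSpace ℝ ι) (ht : t ∈ Metric.closedBall μ ε ∩ K) :
    ‖t‖ ≤ ‖μ‖ + ε := by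
  have h1 : ‖t - μ‖ ≤ ε := mem_closedBall_iff_norm.mp ht.1
  have h2 : ‖t‖ - ‖μ‖ ≤ ‖t - μ‖ := norm_sub_norm_le t μ
  linarith

lemma my_locT_R_nonneg (hε : 0 < ε) (μ : EuclideanSpace ℝ ι) : (0:ℝ) ≤ ‖μ‖ + ε := by
  positivity

lemma my_locWidth_integrable (hε : 0 < ε) (hμ : μ ∈ K) :
    Integrable (fun x : EuclideanSpace ℝ ι =>
      sSup ((fun t => (inner ℝ x t : ℝ)) '' (Metric.closedBall μ ε ∩ K))) (stdGaussian ι) :=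
  my_sup_integrable ⟨μ, my_locT_mem hε hμ⟩ (my_locT_R_nonneg hε μ) my_locT_bound

lemma my_locWidth_nonneg (hε : 0 < ε) (hμ : μ ∈ K) : 0 ≤ locWidth K μ ε := by
  have h := integral_mono (μ := stdGaussian ι) (my_integrable_inner μ)
    (my_locWidth_integrable hε hμ)
    (fun x => my_sup_le_elem my_locT_bound (my_locT_mem hε hμ) x)
  rw [my_integral_inner μ] at h
  exact h

lemma my_locWidth_le (hε : 0 < ε) (hμ : μ ∈ K) :
    locWidth K μ ε ≤ ε * Real.sqrt (Fintype.card ι) := by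
  have hptwise : ∀ x : EuclideanSpace ℝ ι,
      sSup ((fun t => (inner ℝ x t : ℝ)) '' (Metric.closedBall μ ε ∩ K))
        ≤ (inner ℝ x μ : ℝ) + ε * ‖x‖ := by
    intro x
    refine csSup_le (Set.Nonempty.image _ ⟨μ, my_locT_mem hε hμ⟩) ?_
    rintro _ ⟨t, ht, rfl⟩
    have h1 : (inner ℝ x t : ℝ) = (inner ℝ x μ : ℝ) + (inner ℝ x (t - μ) : ℝ) := by
      rw [inner_sub_right]; ring
    have h2 : (inner ℝ x (t - μ) : ℝ) ≤ ‖x‖ * ‖t - μ‖ := real_inner_le_norm _ _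
    have h3 : ‖t - μ‖ ≤ ε := mem_closedBall_iff_norm.mp ht.1
    have h4 : ‖x‖ * ‖t - μ‖ ≤ ‖x‖ * ε := mul_le_mul_of_nonneg_left h3 (norm_nonneg x)
    nlinarith [norm_nonneg x]
  have hint : Integrable (fun x : EuclideanSpace ℝ ι => (inner ℝ x μ : ℝ) + ε * ‖x‖)
      (stdGaussian ι) := (my_integrable_inner μ).add (my_integrable_norm.const_mul ε)
  have h := integral_mono (μ := stdGaussian ι) (my_locWidth_integrable hε hμ) hint hptwise
  rw [integral_add (my_integrable_inner μ) (my_integrable_norm.const_mul ε),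
    my_integral_inner μ, integral_const_mul, zero_add] at h
  calc locWidth K μ ε ≤ ε * ∫ x, ‖x‖ ∂(stdGaussian ι) := h
    _ ≤ ε * Real.sqrt (Fintype.card ι) :=
      mul_le_mul_of_nonneg_left my_expected_norm_le hε.le

lemma my_locWidth_key (hKconv : Convex ℝ K) (hε : 0 < ε) (hμ : μ ∈ K) (hν : ν ∈ K) :
    (ε / (‖μ - ν‖ + ε)) * locWidth K μ ε ≤ locWidth K ν ε := by
  set d := ‖μ - ν‖ with hd
  have hd0 : 0 ≤ d := norm_nonneg _
  have hde : 0 < d + ε := by linarith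
  set a := ε / (d + ε) with ha_def
  set b := d / (d + ε) with hb_def
  have ha : 0 < a := div_pos hε hde
  have hb : 0 ≤ b := div_nonneg hd0 hde.le
  have hab : a + b = 1 := by
    rw [ha_def, hb_def, ← add_div, add_comm ε d, div_self hde.ne']
  have hptwise : ∀ x : EuclideanSpace ℝ ι,
      a * sSup ((fun t => (inner ℝ x t : ℝ)) '' (Metric.closedBall μ ε ∩ K))
        + b * (inner ℝ x ν : ℝ)
        ≤ sSup ((fun t => (inner ℝ x t : ℝ)) '' (Metric.closedBall ν ε ∩ K)) := by
    intro x
    have hsup : sSup ((fun t => (inner ℝ x t : ℝ)) '' (Metric.closedBall μ ε ∩ K))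
        ≤ (sSup ((fun t => (inner ℝ x t : ℝ)) '' (Metric.closedBall ν ε ∩ K))
          - b * (inner ℝ x ν : ℝ)) / a := by
      refine csSup_le (Set.Nonempty.image _ ⟨μ, my_locT_mem hε hμ⟩) ?_
      rintro _ ⟨t, ht, rfl⟩
      set y := a • t + b • ν with hy
      have hyK : y ∈ K := hKconv ht.2 hν ha.le hb hab
      have hyball : y ∈ Metric.closedBall ν ε := by
        rw [Metric.mem_closedBall, dist_eq_norm]
        have h1 : y - ν = a • (t - ν) := by
          calc y - ν = a • t + b • ν - (a + b) • ν := by rw [hab, one_smul]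
            _ = a • (t - ν) := by module
        rw [h1, norm_smul, Real.norm_eq_abs, abs_of_pos ha]
        have h2 : ‖t - ν‖ ≤ ε + d := by
          have h3 : t - ν = (t - μ) + (μ - ν) := by abel
          rw [h3]
          have h4 := norm_add_le (t - μ) (μ - ν)
          have h5 : ‖t - μ‖ ≤ ε := mem_closedBall_iff_norm.mp ht.1
          rw [← hd] at h4
          linarith
        have h6 : a * ‖t - ν‖ ≤ a * (ε + d) := mul_le_mul_of_nonneg_left h2 ha.le
        have h7 : a * (ε + d) = ε := by
          rw [ha_def, add_comm ε d, div_mul_cancel₀ _ hde.ne']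
        linarith
      have h8 : (inner ℝ x y : ℝ) = a * (inner ℝ x t : ℝ) + b * (inner ℝ x ν : ℝ) := by
        rw [hy, inner_add_right, real_inner_smul_right, real_inner_smul_right]
      have h9 := my_sup_le_elem (T := Metric.closedBall ν ε ∩ K) my_locT_bound ⟨hyball, hyK⟩ x
      rw [h8] at h9
      rw [le_div_iff₀ ha]
      linarith
    rw [le_div_iff₀ ha] at hsup
    linarith
  have hintL : Integrable (fun x : EuclideanSpace ℝ ι =>
      a * sSup ((fun t => (inner ℝ x t : ℝ)) '' (Metric.closedBall μ ε ∩ K))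
        + b * (inner ℝ x ν : ℝ)) (stdGaussian ι) :=
    ((my_locWidth_integrable hε hμ).const_mul a).add ((my_integrable_inner ν).const_mul b)
  have h := integral_mono (μ := stdGaussian ι) hintL (my_locWidth_integrable hε hν) hptwise
  rw [integral_add ((my_locWidth_integrable hε hμ).const_mul a)
    ((my_integrable_inner ν).const_mul b), integral_const_mul, integral_const_mul,
    my_integral_inner ν, mul_zero, add_zero] at h
  exact h

end width

end Aux

/-- for a convex `K ⊂ ℝⁿ`, any `ε > 0` and `μ, ν ∈ K`:
`|w_μ(ε) − w_ν(ε)| ≤ ‖μ−ν‖·(w_μ(ε) ∧ w_ν(ε))/ε ≤ √n·‖μ−ν‖`; in particular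
`ν ↦ w_ν(ε)` is `√n`-Lipschitz on `K`. -/
theorem stmt_2 {n : ℕ} (K : Set (EuclideanSpace ℝ (Fin n))) (hKconv : Convex ℝ K)
    (ε : ℝ) (hε : 0 < ε)
    (μ ν : EuclideanSpace ℝ (Fin n)) (hμ : μ ∈ K) (hν : ν ∈ K) :
    |locWidth K μ ε - locWidth K ν ε| ≤ ‖μ - ν‖ * min (locWidth K μ ε) (locWidth K ν ε) / ε ∧
      ‖μ - ν‖ * min (locWidth K μ ε) (locWidth K ν ε) / ε ≤ Real.sqrt n * ‖μ - ν‖ := by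
  set d := ‖μ - ν‖ with hd
  have hd0 : 0 ≤ d := norm_nonneg _
  have hde : 0 < d + ε := by linarith
  set wμ := locWidth K μ ε with hwμ
  set wν := locWidth K ν ε with hwν
  have hνμ : ‖ν - μ‖ = d := by rw [hd, norm_sub_rev]
  have h1 : (ε / (d + ε)) * wμ ≤ wν := my_locWidth_key hKconv hε hμ hν
  have h2 : (ε / (d + ε)) * wν ≤ wμ := by
    have := my_locWidth_key hKconv hε hν hμ
    rwa [hνμ] at this
  have hwμ0 : 0 ≤ wμ := my_locWidth_nonneg hε hμ
  have hwν0 : 0 ≤ wν := my_locWidth_nonneg hε hν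
  have hwμle : wμ ≤ ε * Real.sqrt n := by
    have := my_locWidth_le (K := K) hε hμ
    simpa using this
  have hwνle : wν ≤ ε * Real.sqrt n := by
    have := my_locWidth_le (K := K) hε hν
    simpa using this
  -- clear denominators in h1, h2
  have H1 : ε * wμ ≤ wν * (d + ε) := by
    rw [div_mul_eq_mul_div, div_le_iff₀ hde] at h1
    linarith
  have H2 : ε * wν ≤ wμ * (d + ε) := by
    rw [div_mul_eq_mul_div, div_le_iff₀ hde] at h2
    linarith
  constructor
  · rw [abs_sub_le_iff]
    constructor
    · rcases le_total wμ wν with hmin | hmin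
      · rw [min_eq_left hmin]
        have : 0 ≤ d * wμ / ε := by positivity
        linarith
      · rw [min_eq_right hmin, le_div_iff₀ hε]
        nlinarith
    · rcases le_total wμ wν with hmin | hmin
      · rw [min_eq_left hmin, le_div_iff₀ hε]
        nlinarith
      · rw [min_eq_right hmin]
        have : 0 ≤ d * wν / ε := by positivity
        linarith
  · rw [div_le_iff₀ hε]
    have hmin : min wμ wν ≤ ε * Real.sqrt n := le_trans (min_le_left _ _) hwμle
    have hminnn : 0 ≤ min wμ wν := le_min hwμ0 hwν0
    nlinarith [Real.sqrt_nonneg (n:ℝ)]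
end

section
/- Let K ⊂ R^n be a closed convex set with diameter d containing a segment of length 2ε for ε = (σ ∧ d)/κ with κ > max(2, √(1/log 2)). Then the critical radius ε* = sup{ε : ε²/σ² ≤ log M^loc(ε)} satisfies ε* ≳ σ ∧ d, i.e., ε* ≥ c·min(σ,d) for an absolute constant c > 0. -/
open MeasureTheory Metric

/-- packing number: the largest cardinality of a subset of `T` with pairwise distances `> η` -/
noncomputable def packingNum {E : Type*} [PseudoMetricSpace E] (η : ℝ) (T : Set E) : ℕ :=
  sSup {N | ∃ S : Finset E, ↑S ⊆ T ∧ (∀ x ∈ S, ∀ y ∈ S, x ≠ y → η < dist x y) ∧ S.card = N}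

/-- local packing number `M^loc(ε) = sup_{θ∈K} M(ε/c*, B(θ,ε)∩K)` -/
noncomputable def Mloc {E : Type*} [PseudoMetricSpace E] (cstar : ℝ) (K : Set E) (ε : ℝ) : ℕ :=
  sSup {N | ∃ θ ∈ K, packingNum (ε / cstar) (closedBall θ ε ∩ K) = N}

/-- Cardinality bound for η-separated finsets inside a bounded set. -/
lemma sep_card_bound {E : Type*} [MetricSpace E] [ProperSpace E] {K : Set E}
    (hK : Bornology.IsBounded K) {η : ℝ} (hη : 0 < η) :
    ∃ M : ℕ, ∀ S : Finset E, ↑S ⊆ K →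
      (∀ x ∈ S, ∀ y ∈ S, x ≠ y → η < dist x y) → S.card ≤ M := by
  have htb : TotallyBounded K :=
    (hK.isCompact_closure.totallyBounded).subset subset_closure
  obtain ⟨t, htf, hcov⟩ := Metric.totallyBounded_iff.mp htb (η/2) (by linarith)
  refine ⟨htf.toFinset.card, fun S hS hsep => ?_⟩
  classical
  have hf : ∀ x ∈ S, ∃ y ∈ htf.toFinset, x ∈ ball y (η/2) := by
    intro x hx
    have := hcov (hS hx)
    simp only [Set.mem_iUnion] at this
    obtain ⟨y, hy, hxy⟩ := this
    exact ⟨y, htf.mem_toFinset.mpr hy, hxy⟩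
  choose f hf1 hf2 using hf
  refine Finset.card_le_card_of_injOn (fun x => if h : x ∈ S then f x h else x)
    (fun x hx => by rw [Finset.mem_coe] at hx; simpa [hx] using hf1 x hx) ?_
  intro a ha b hb hab
  simp only [Finset.mem_coe] at ha hb
  simp only [dif_pos ha, dif_pos hb] at hab
  by_contra hne
  have h1 := mem_ball.mp (hf2 a ha)
  have h2 := mem_ball.mp (hf2 b hb)
  have h3 : dist a b ≤ dist a (f a ha) + dist (f b hb) b := by
    rw [hab]; exact dist_triangle _ _ _
  rw [dist_comm (f b hb) b] at h3
  have := hsep a ha b hb hne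
  linarith

lemma packingNum_bddAbove {E : Type*} [PseudoMetricSpace E] {T : Set E} {η : ℝ} {M : ℕ}
    (hM : ∀ S : Finset E, ↑S ⊆ T → (∀ x ∈ S, ∀ y ∈ S, x ≠ y → η < dist x y) → S.card ≤ M) :
    BddAbove {N | ∃ S : Finset E, ↑S ⊆ T ∧
      (∀ x ∈ S, ∀ y ∈ S, x ≠ y → η < dist x y) ∧ S.card = N} := by
  refine ⟨M, fun N hN => ?_⟩
  obtain ⟨S, hS1, hS2, hS3⟩ := hN
  exact hS3 ▸ hM S hS1 hS2

lemma le_packingNum {E : Type*} [PseudoMetricSpace E] {T : Set E} {η : ℝ} {M : ℕ}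
    (hM : ∀ S : Finset E, ↑S ⊆ T → (∀ x ∈ S, ∀ y ∈ S, x ≠ y → η < dist x y) → S.card ≤ M)
    (S : Finset E) (hS1 : ↑S ⊆ T) (hS2 : ∀ x ∈ S, ∀ y ∈ S, x ≠ y → η < dist x y) :
    S.card ≤ packingNum η T :=
  le_csSup (packingNum_bddAbove hM) ⟨S, hS1, hS2, rfl⟩

lemma packingNum_le {E : Type*} [PseudoMetricSpace E] {T : Set E} {η : ℝ} {M : ℕ}
    (hM : ∀ S : Finset E, ↑S ⊆ T → (∀ x ∈ S, ∀ y ∈ S, x ≠ y → η < dist x y) → S.card ≤ M) :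
    packingNum η T ≤ M := by
  have hne : {N | ∃ S : Finset E, ↑S ⊆ T ∧
      (∀ x ∈ S, ∀ y ∈ S, x ≠ y → η < dist x y) ∧ S.card = N}.Nonempty := ⟨0, ∅, by simp⟩
  apply csSup_le hne
  rintro N ⟨S, hS1, hS2, rfl⟩
  exact hM S hS1 hS2

lemma packingNum_spec {E : Type*} [PseudoMetricSpace E] {T : Set E} {η : ℝ} {M : ℕ}
    (hM : ∀ S : Finset E, ↑S ⊆ T → (∀ x ∈ S, ∀ y ∈ S, x ≠ y → η < dist x y) → S.card ≤ M) :
    ∃ S : Finset E, ↑S ⊆ T ∧ (∀ x ∈ S, ∀ y ∈ S, x ≠ y → η < dist x y) ∧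
      S.card = packingNum η T := by
  have hne : {N | ∃ S : Finset E, ↑S ⊆ T ∧
      (∀ x ∈ S, ∀ y ∈ S, x ≠ y → η < dist x y) ∧ S.card = N}.Nonempty := ⟨0, ∅, by simp⟩
  have h := Nat.sSup_mem hne (packingNum_bddAbove hM)
  rw [packingNum]
  exact h

lemma Mloc_bddAbove {E : Type*} [PseudoMetricSpace E] {K : Set E} {cstar ε : ℝ} {M : ℕ}
    (hM : ∀ S : Finset E, ↑S ⊆ K →
      (∀ x ∈ S, ∀ y ∈ S, x ≠ y → ε / cstar < dist x y) → S.card ≤ M) :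
    BddAbove {N | ∃ θ ∈ K, packingNum (ε / cstar) (closedBall θ ε ∩ K) = N} := by
  refine ⟨M, fun N hN => ?_⟩
  obtain ⟨θ, _, rfl⟩ := hN
  exact packingNum_le fun S hS1 hS2 => hM S (hS1.trans Set.inter_subset_right) hS2

lemma le_Mloc {E : Type*} [PseudoMetricSpace E] {K : Set E} {cstar ε : ℝ} {M : ℕ}
    (hM : ∀ S : Finset E, ↑S ⊆ K →
      (∀ x ∈ S, ∀ y ∈ S, x ≠ y → ε / cstar < dist x y) → S.card ≤ M)
    {θ : E} (hθ : θ ∈ K) :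
    packingNum (ε / cstar) (closedBall θ ε ∩ K) ≤ Mloc cstar K ε :=
  le_csSup (Mloc_bddAbove hM) ⟨θ, hθ, rfl⟩

lemma Mloc_spec {E : Type*} [PseudoMetricSpace E] {K : Set E} {cstar ε : ℝ} {M : ℕ}
    (hM : ∀ S : Finset E, ↑S ⊆ K →
      (∀ x ∈ S, ∀ y ∈ S, x ≠ y → ε / cstar < dist x y) → S.card ≤ M)
    (hne : K.Nonempty) :
    ∃ θ ∈ K, packingNum (ε / cstar) (closedBall θ ε ∩ K) = Mloc cstar K ε := by
  obtain ⟨θ₀, hθ₀⟩ := hne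
  have hne' : {N | ∃ θ ∈ K, packingNum (ε / cstar) (closedBall θ ε ∩ K) = N}.Nonempty :=
    ⟨_, θ₀, hθ₀, rfl⟩
  have h := Nat.sSup_mem hne' (Mloc_bddAbove hM)
  rw [Mloc]
  exact h

/-- there is an absolute constant `c > 0` such that for every sufficiently large
`c*`, any closed convex `K ⊂ ℝⁿ` (diameter `d`) containing a segment of length
`2·(σ∧d)/κ` with `κ > max(2, √(1/log 2))` has critical radius
`ε* = sup{ε : ε²/σ² ≤ log M^loc(ε)} ≥ c·(σ ∧ d)`. -/
theorem stmt_6 :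
    ∃ c > (0:ℝ), ∃ C₀ : ℝ, ∀ cstar : ℝ, C₀ ≤ cstar →
      ∀ (n : ℕ) (K : Set (EuclideanSpace ℝ (Fin n))),
        IsClosed K → Convex ℝ K → Bornology.IsBounded K →
        ∀ σ : ℝ, 0 < σ → ∀ κ : ℝ, max 2 (Real.sqrt (1 / Real.log 2)) < κ →
        (∃ x ∈ K, ∃ y ∈ K, dist x y = 2 * (min σ (Metric.diam K) / κ)) →
        c * min σ (Metric.diam K) ≤
          sSup {ε : ℝ | 0 < ε ∧ ε ^ 2 / σ ^ 2 ≤ Real.log (Mloc cstar K ε)} := by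
  classical
  refine ⟨1/4, by norm_num, 1, ?_⟩
  intro cstar hcstar n K hKcl hKconv hKb σ hσ κ hκ hseg
  set m := min σ (Metric.diam K) with hm
  rcases le_or_gt m 0 with hm0 | hm0
  · have h1 : (1/4 : ℝ) * m ≤ 0 := by nlinarith
    exact h1.trans (Real.sSup_nonneg fun x hx => hx.1.le)
  · have hcstar0 : (0:ℝ) < cstar := lt_of_lt_of_le one_pos hcstar
    have hmσ : m ≤ σ := min_le_left _ _
    have hmd : m ≤ Metric.diam K := min_le_right _ _
    -- points at distance > m/2
    have hab : ∃ a ∈ K, ∃ b ∈ K, m/2 < dist a b := by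
      by_contra h
      push_neg at h
      have : Metric.diam K ≤ m/2 :=
        Metric.diam_le_of_forall_dist_le (by linarith) fun x hx y hy => h x hx y hy
      linarith
    obtain ⟨a, ha, b, hb, hab2⟩ := hab
    have hdab : 0 < dist a b := lt_of_le_of_lt (by linarith) hab2
    -- point z on segment with dist z a = m/2
    set t : ℝ := (m/2) / dist a b with ht
    have ht0 : 0 ≤ t := by positivity
    have ht1 : t ≤ 1 := by
      rw [ht, div_le_one hdab]; linarith
    set z := AffineMap.lineMap a b t with hzdef
    have hz : z ∈ K := hKconv.lineMap_mem ha hb ⟨ht0, ht1⟩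
    have hdza : dist z a = m/2 := by
      rw [hzdef, dist_lineMap_left, Real.norm_of_nonneg ht0, ht,
        div_mul_cancel₀ _ (ne_of_gt hdab)]
    set ε := m/4 with hε
    have hε0 : 0 < ε := by linarith
    set θ := midpoint ℝ a z with hθ
    have hθK : θ ∈ K := hKconv.segment_subset ha hz (midpoint_mem_segment a z)
    have hdθa : dist θ a = ε := by
      rw [hθ, dist_midpoint_left, dist_comm a z, hdza]
      norm_num [hε]; ring
    have hdθz : dist θ z = ε := by
      rw [hθ, dist_midpoint_right, dist_comm a z, hdza]
      norm_num [hε]; ring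
    have haT : a ∈ closedBall θ ε ∩ K := ⟨by rw [mem_closedBall, dist_comm]; exact hdθa.le, ha⟩
    have hzT : z ∈ closedBall θ ε ∩ K := ⟨by rw [mem_closedBall, dist_comm]; exact hdθz.le, hz⟩
    have haz : a ≠ z := by
      intro h
      rw [h, dist_self] at hdza; linarith
    have hηpos : 0 < ε / cstar := div_pos hε0 hcstar0
    obtain ⟨M, hM⟩ := sep_card_bound hKb hηpos
    have hsep : ∀ x ∈ ({a, z} : Finset (EuclideanSpace ℝ (Fin n))),
        ∀ y ∈ ({a, z} : Finset (EuclideanSpace ℝ (Fin n))), x ≠ y → ε / cstar < dist x y := by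
      have hcs : ε / cstar ≤ ε := div_le_self hε0.le hcstar
      intro x hx y hy hxy
      simp only [Finset.mem_insert, Finset.mem_singleton] at hx hy
      rcases hx with rfl | rfl <;> rcases hy with rfl | rfl
      · exact absurd rfl hxy
      · rw [dist_comm, hdza]; apply lt_of_le_of_lt hcs; rw [hε]; linarith
      · rw [hdza]; apply lt_of_le_of_lt hcs; rw [hε]; linarith
      · exact absurd rfl hxy
    have hpack : 2 ≤ packingNum (ε / cstar) (closedBall θ ε ∩ K) := by
      rw [← Finset.card_pair haz]
      refine le_packingNum (fun S hS1 hS2 => hM S (hS1.trans Set.inter_subset_right) hS2)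
        {a, z} ?_ hsep
      intro x hx
      simp only [Finset.coe_insert, Finset.coe_singleton, Set.mem_insert_iff,
        Set.mem_singleton_iff] at hx
      rcases hx with rfl | rfl
      · exact haT
      · exact hzT
    have hMloc : 2 ≤ Mloc cstar K ε := le_trans hpack (le_Mloc hM hθK)
    -- ε is in the critical set
    have hεmem : ε ∈ {ε' : ℝ | 0 < ε' ∧ ε' ^ 2 / σ ^ 2 ≤ Real.log (Mloc cstar K ε')} := by
      refine Set.mem_setOf_eq ▸ ⟨hε0, ?_⟩
      have hlog : Real.log 2 ≤ Real.log (Mloc cstar K ε) := by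
        apply Real.log_le_log (by norm_num)
        exact_mod_cast hMloc
      have h2 : Real.log 2 > 0.6931471803 := Real.log_two_gt_d9
      have hεσ : ε ≤ σ/4 := by rw [hε]; linarith
      have hsq : ε^2/σ^2 ≤ 1/16 := by
        rw [div_le_iff₀ (by positivity)]
        nlinarith
      linarith
    -- critical set is bounded above
    have hbdd : BddAbove {ε' : ℝ | 0 < ε' ∧ ε' ^ 2 / σ ^ 2 ≤ Real.log (Mloc cstar K ε')} := by
      refine ⟨cstar * Metric.diam K, fun ε' hε' => ?_⟩
      obtain ⟨hε'0, hε'log⟩ := hε'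
      have hη'pos : 0 < ε' / cstar := div_pos hε'0 hcstar0
      obtain ⟨M', hM'⟩ := sep_card_bound hKb hη'pos
      have hlogpos : 0 < Real.log (Mloc cstar K ε') :=
        lt_of_lt_of_le (by positivity) hε'log
      have hMloc2 : 2 ≤ Mloc cstar K ε' := by
        by_contra h
        push_neg at h
        have hc : ((Mloc cstar K ε' : ℕ) : ℝ) ≤ 1 := by
          exact_mod_cast Nat.lt_succ_iff.mp h
        have := Real.log_nonpos (by positivity) hc
        linarith
      obtain ⟨θ', hθ'K, hθ'eq⟩ := Mloc_spec hM' ⟨a, ha⟩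
      obtain ⟨S, hS1, hS2, hS3⟩ :=
        packingNum_spec (fun S hS1 hS2 => hM' S (hS1.trans Set.inter_subset_right) hS2)
        (T := closedBall θ' ε' ∩ K)
      have hScard : 1 < S.card := by
        rw [hS3, hθ'eq]
        exact lt_of_lt_of_le one_lt_two hMloc2
      obtain ⟨u, hu, v, hv, huv⟩ := Finset.one_lt_card.mp hScard
      have hdist : ε' / cstar < dist u v := hS2 u hu v hv huv
      have hdiam : dist u v ≤ Metric.diam K :=
        Metric.dist_le_diam_of_mem hKb (hS1 hu).2 (hS1 hv).2
      rw [div_lt_iff₀ hcstar0] at hdist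
      have : ε' < cstar * Metric.diam K := by nlinarith [dist_nonneg (x := u) (y := v)]
      exact this.le
    calc (1/4 : ℝ) * m = ε := by rw [hε]; ring
      _ ≤ _ := le_csSup hbdd hεmem
end
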